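/- For the linear advection equation u_t + c u_x = 0 with c > 0 on the model mesh with one small cell I_k of length αh (α ∈ (0,1]) and upwind fluxes F_{i+1/2} = c U_i, the mixed explicit-implicit scheme (explicit update away from I_k, implicit fluxes at the faces x_{k±1/2}) is monotone: each updated value U_i^{n+1} is a convex combination of old values U^n, provided Δt ≤ h/c. -/

import Mathlib

set_option maxHeartbeats 1000000


/-- For linear advection `u_t + c u_x = 0` with `c > 0` on the model
mesh with one small cell `I_k` of length `αh` (`α ∈ (0,1]`) and upwind fluxes
`F_{i+1/2} = c U_i`, the mixed explicit-implicit scheme is monotone: each updated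
value `U_i^{n+1}` is a convex combination of old values `U^n`, provided `Δt ≤ h/c`. -/
theorem mixed_explicit_implicit_monotone
    (c h α Δt : ℝ) (k : ℤ) (hc : 0 < c) (hh : 0 < h)
    (hα : 0 < α) (hα1 : α ≤ 1) (hΔt : 0 < Δt) (hCFL : Δt ≤ h / c)
    (U V : ℤ → ℝ)
    (hexpl : ∀ i : ℤ, (i ≤ k - 2 ∨ k + 2 ≤ i) →
      V i = U i - (c * Δt / h) * (U i - U (i - 1)))
    (hkm : V (k - 1) = U (k - 1) - (Δt / h) * (c * V (k - 1) - c * U (k - 2)))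
    (hk : V k = U k - (Δt / (α * h)) * (c * V k - c * V (k - 1)))
    (hkp : V (k + 1) = U (k + 1) - (Δt / h) * (c * U (k + 1) - c * V k)) :
    ∀ i : ℤ, ∃ (s : Finset ℤ) (w : ℤ → ℝ),
      (∀ j ∈ s, 0 ≤ w j) ∧ (∑ j ∈ s, w j) = 1 ∧ V i = ∑ j ∈ s, w j * U j := by
  intro i
  set L : ℝ := c * Δt / h with hLdef
  set M : ℝ := c * Δt / (α * h) with hMdef
  have hL0 : 0 < L := by positivity
  have hM0 : 0 < M := by positivity
  have hL1 : L ≤ 1 := by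
    rw [hLdef, div_le_one hh]
    calc c * Δt ≤ c * (h / c) := by nlinarith
    _ = h := by field_simp
  have h1L : (0:ℝ) < 1 + L := by linarith
  have h1M : (0:ℝ) < 1 + M := by linarith
  have e1 : V (k - 1) = (1 / (1 + L)) * U (k - 1) + (L / (1 + L)) * U (k - 2) := by
    have hne : h ≠ 0 := ne_of_gt hh
    field_simp [hLdef] at *
    apply mul_right_cancel₀ hne
    linear_combination hkm + (V (k - 1) - U (k - 2)) * hLdef
  have e2 : V k = (1 / (1 + M)) * U k + (M / (1 + M)) * V (k - 1) := by
    have hne : α * h ≠ 0 := by positivity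
    field_simp [hMdef] at *
    apply mul_right_cancel₀ hne
    linear_combination hk + (V k - V (k - 1)) * hMdef
  have e3 : V (k + 1) = (1 - L) * U (k + 1) + L * V k := by
    rw [hkp, hLdef]; ring
  rcases eq_or_ne i (k - 1) with rfl | h1
  · refine ⟨{k - 1, k - 2}, fun j => if j = k - 1 then 1 / (1 + L) else L / (1 + L), ?_, ?_, ?_⟩
    · intro j hj
      dsimp only
      split <;> positivity
    · rw [Finset.sum_pair (by omega)]
      simp only [if_pos rfl, if_neg (by omega : (k:ℤ) - 2 ≠ k - 1), if_true]
      field_simp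
    · rw [Finset.sum_pair (by omega)]
      simp only [if_pos rfl, if_neg (by omega : (k:ℤ) - 2 ≠ k - 1)]
      exact e1
  rcases eq_or_ne i k with h2 | h2
  · rw [h2]
    refine ⟨{k, k - 1, k - 2}, fun j =>
      if j = k then 1 / (1 + M)
      else if j = k - 1 then M / ((1 + M) * (1 + L))
      else M * L / ((1 + M) * (1 + L)), ?_, ?_, ?_⟩
    · intro j hj
      dsimp only
      split
      · positivity
      · split <;> positivity
    · rw [Finset.sum_insert (by simp; omega), Finset.sum_pair (by omega)]
      simp only [if_pos rfl, if_neg (by omega : (k:ℤ) - 1 ≠ k),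
        if_neg (by omega : (k:ℤ) - 2 ≠ k), if_neg (by omega : (k:ℤ) - 2 ≠ k - 1), if_true]
      field_simp
    · rw [Finset.sum_insert (by simp; omega), Finset.sum_pair (by omega)]
      simp only [if_pos rfl, if_neg (by omega : (k:ℤ) - 1 ≠ k),
        if_neg (by omega : (k:ℤ) - 2 ≠ k), if_neg (by omega : (k:ℤ) - 2 ≠ k - 1), if_true]
      rw [e2, e1]
      field_simp
  rcases eq_or_ne i (k + 1) with rfl | h3
  · refine ⟨{k + 1, k, k - 1, k - 2}, fun j =>
      if j = k + 1 then 1 - L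
      else if j = k then L / (1 + M)
      else if j = k - 1 then L * M / ((1 + M) * (1 + L))
      else L * M * L / ((1 + M) * (1 + L)), ?_, ?_, ?_⟩
    · intro j hj
      dsimp only
      split
      · linarith
      · split
        · positivity
        · split <;> positivity
    · rw [Finset.sum_insert (by simp; omega), Finset.sum_insert (by simp; omega),
        Finset.sum_pair (by omega)]
      simp only [if_pos rfl, if_neg (by omega : (k:ℤ) ≠ k + 1),
        if_neg (by omega : (k:ℤ) - 1 ≠ k + 1), if_neg (by omega : (k:ℤ) - 1 ≠ k),
        if_neg (by omega : (k:ℤ) - 2 ≠ k + 1), if_neg (by omega : (k:ℤ) - 2 ≠ k),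
        if_neg (by omega : (k:ℤ) - 2 ≠ k - 1), if_true]
      field_simp
      ring
    · rw [Finset.sum_insert (by simp; omega), Finset.sum_insert (by simp; omega),
        Finset.sum_pair (by omega)]
      simp only [if_pos rfl, if_neg (by omega : (k:ℤ) ≠ k + 1),
        if_neg (by omega : (k:ℤ) - 1 ≠ k + 1), if_neg (by omega : (k:ℤ) - 1 ≠ k),
        if_neg (by omega : (k:ℤ) - 2 ≠ k + 1), if_neg (by omega : (k:ℤ) - 2 ≠ k),
        if_neg (by omega : (k:ℤ) - 2 ≠ k - 1), if_true]
      rw [e3, e2, e1]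
      field_simp
  · -- explicit case
    have hcase : i ≤ k - 2 ∨ k + 2 ≤ i := by omega
    have he := hexpl i hcase
    refine ⟨{i, i - 1}, fun j => if j = i then 1 - L else L, ?_, ?_, ?_⟩
    · intro j hj
      dsimp only
      split
      · linarith
      · linarith
    · rw [Finset.sum_pair (by omega)]
      simp only [if_pos rfl, if_neg (by omega : i - 1 ≠ i), if_true]
      ring
    · rw [Finset.sum_pair (by omega)]
      simp only [if_pos rfl, if_neg (by omega : i - 1 ≠ i), if_true]
      rw [he]; ring
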